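/- For every natural number n ≥ 10, n^{-1/n} ≤ 1 - (3/4)·(ln n)/n, where n^{-1/n} denotes the real power and ln is the natural logarithm. -/

import Mathlib

theorem rpow_neg_inv_le (n : ℕ) (hn : 10 ≤ n) :
    (n : ℝ) ^ (-(1 : ℝ) / n) ≤ 1 - 3 / 4 * Real.log n / n := by
  have hn10 : (10 : ℝ) ≤ n := by exact_mod_cast hn
  have hnpos : (0 : ℝ) < n := by linarith
  have hlogpos : 0 < Real.log n := Real.log_pos (by linarith)
  -- log n ≤ n / 3
  have hlog3 : Real.log n ≤ n / 3 := by
    rw [Real.log_le_iff_le_exp hnpos]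
    have h1 : (1 : ℝ) + n / 12 ≤ Real.exp (n / 12) := by linarith [Real.add_one_le_exp ((n:ℝ)/12)]
    have h2 : Real.exp (n / 3) = (Real.exp (n / 12)) ^ 4 := by
      rw [← Real.exp_nat_mul]; ring_nf
    have h3 : ((1 : ℝ) + n / 12) ^ 4 ≤ (Real.exp (n / 12)) ^ 4 := by
      apply pow_le_pow_left₀ (by positivity) h1
    have h4 : (n : ℝ) ≤ ((1 : ℝ) + n / 12) ^ 4 := by nlinarith [sq_nonneg ((n:ℝ) - 10)]
    linarith [h2 ▸ h3]
  set t : ℝ := Real.log n / n with ht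
  have htpos : 0 < t := div_pos hlogpos hnpos
  have ht3 : t ≤ 1 / 3 := by
    rw [ht, div_le_div_iff₀ hnpos (by norm_num)]
    linarith
  have hrw : (n : ℝ) ^ (-(1 : ℝ) / n) = Real.exp (-t) := by
    rw [Real.rpow_def_of_pos hnpos]
    congr 1
    field_simp [ht]
    rw [ht]; field_simp
  rw [hrw]
  have h1t : (1 : ℝ) + t ≤ Real.exp t := by linarith [Real.add_one_le_exp t]
  have hexp : Real.exp (-t) ≤ 1 / (1 + t) := by
    rw [Real.exp_neg, one_div]
    exact inv_anti₀ (by linarith) h1t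
  have hfinal : 1 / (1 + t) ≤ 1 - 3 / 4 * t := by
    rw [div_le_iff₀ (by linarith)]
    nlinarith
  have : 1 - 3 / 4 * Real.log ↑n / ↑n = 1 - 3 / 4 * t := by rw [ht]; ring
  rw [this]
  linarith
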